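/- Let l(x,y,z) = 2x − 5y + 11z and F(x,y,z) = x³ + y³ + z³ − 6xyz + l(x,y,z)². Then the origin is a critical point of F with critical value 0, and every real critical point a ∈ ℝ³ of F with a ≠ (0,0,0) satisfies F(a) > 0. -/

import Mathlib

noncomputable section

/-- `F = x³ + y³ + z³ - 6xyz + l²` with `l = 2x - 5y + 11z`. -/
def F19 (v : ℝ × ℝ × ℝ) : ℝ :=
  v.1 ^ 3 + v.2.1 ^ 3 + v.2.2 ^ 3 - 6 * v.1 * v.2.1 * v.2.2 +
    (2 * v.1 - 5 * v.2.1 + 11 * v.2.2) ^ 2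

namespace F19aux

def p1 : ℝ × ℝ × ℝ →L[ℝ] ℝ := ContinuousLinearMap.fst ℝ ℝ (ℝ × ℝ)
def p2 : ℝ × ℝ × ℝ →L[ℝ] ℝ :=
  (ContinuousLinearMap.fst ℝ ℝ ℝ).comp (ContinuousLinearMap.snd ℝ ℝ (ℝ × ℝ))
def p3 : ℝ × ℝ × ℝ →L[ℝ] ℝ :=
  (ContinuousLinearMap.snd ℝ ℝ ℝ).comp (ContinuousLinearMap.snd ℝ ℝ (ℝ × ℝ))

def lf (a : ℝ × ℝ × ℝ) : ℝ := 2 * a.1 - 5 * a.2.1 + 11 * a.2.2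

def D (a : ℝ × ℝ × ℝ) : ℝ × ℝ × ℝ →L[ℝ] ℝ :=
  (3 * a.1 ^ 2 - 6 * a.2.1 * a.2.2 + 4 * lf a) • p1 +
  (3 * a.2.1 ^ 2 - 6 * a.1 * a.2.2 - 10 * lf a) • p2 +
  (3 * a.2.2 ^ 2 - 6 * a.1 * a.2.1 + 22 * lf a) • p3

lemma hF (a : ℝ × ℝ × ℝ) : HasFDerivAt F19 (D a) a := by
  have h1 : HasFDerivAt (fun v : ℝ × ℝ × ℝ => v.1) p1 a := hasFDerivAt_fst
  have h2 : HasFDerivAt (fun v : ℝ × ℝ × ℝ => v.2.1) p2 a :=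
    hasFDerivAt_fst.comp a hasFDerivAt_snd
  have h3 : HasFDerivAt (fun v : ℝ × ℝ × ℝ => v.2.2) p3 a :=
    hasFDerivAt_snd.comp a hasFDerivAt_snd
  have hl := ((h1.const_mul (2:ℝ)).sub (h2.const_mul 5)).add (h3.const_mul 11)
  have H := (((((h1.mul h1).mul h1).add ((h2.mul h2).mul h2)).add
      ((h3.mul h3).mul h3)).sub (((h1.const_mul 6).mul h2).mul h3)).add (hl.mul hl)
  have hfun : F19 = fun v : ℝ × ℝ × ℝ =>
      v.1 * v.1 * v.1 + v.2.1 * v.2.1 * v.2.1 + v.2.2 * v.2.2 * v.2.2 -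
        6 * v.1 * v.2.1 * v.2.2 +
        (2 * v.1 - 5 * v.2.1 + 11 * v.2.2) * (2 * v.1 - 5 * v.2.1 + 11 * v.2.2) := by
    funext v
    simp only [F19]
    ring
  rw [hfun]
  refine H.congr_fderiv ?_
  apply ContinuousLinearMap.ext
  intro w
  simp [D, p1, p2, p3, lf, ContinuousLinearMap.comp_apply]
  ring

end F19aux

/-- The origin is a critical point of `F = x³ + y³ + z³ - 6xyz + (2x - 5y + 11z)²` with
critical value `0`, and every other real critical point of `F` has positive critical
value. -/
theorem F19_critical_values_positive_away_from_origin :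
    fderiv ℝ F19 0 = 0 ∧ F19 0 = 0 ∧
      ∀ a : ℝ × ℝ × ℝ, a ≠ 0 → fderiv ℝ F19 a = 0 → 0 < F19 a := by
  refine ⟨?_, by norm_num [F19], ?_⟩
  · rw [(F19aux.hF 0).fderiv]
    apply ContinuousLinearMap.ext
    intro w
    simp [F19aux.D, F19aux.p1, F19aux.p2, F19aux.p3, F19aux.lf]
  · intro a ha h0
    rw [(F19aux.hF a).fderiv] at h0
    have E1 : 3 * a.1 ^ 2 - 6 * a.2.1 * a.2.2 + 4 * F19aux.lf a = 0 := by
      have := congrArg (fun L : ℝ × ℝ × ℝ →L[ℝ] ℝ => L (1, 0, 0)) h0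
      simpa [F19aux.D, F19aux.p1, F19aux.p2, F19aux.p3] using this
    have E2 : 3 * a.2.1 ^ 2 - 6 * a.1 * a.2.2 - 10 * F19aux.lf a = 0 := by
      have := congrArg (fun L : ℝ × ℝ × ℝ →L[ℝ] ℝ => L (0, 1, 0)) h0
      simpa [F19aux.D, F19aux.p1, F19aux.p2, F19aux.p3] using this
    have E3 : 3 * a.2.2 ^ 2 - 6 * a.1 * a.2.1 + 22 * F19aux.lf a = 0 := by
      have := congrArg (fun L : ℝ × ℝ × ℝ →L[ℝ] ℝ => L (0, 0, 1)) h0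
      simpa [F19aux.D, F19aux.p1, F19aux.p2, F19aux.p3] using this
    -- Euler relation: 3 * F19 a = (lf a)^2
    have hEuler : 3 * F19 a = (F19aux.lf a) ^ 2 := by
      simp only [F19, F19aux.lf] at *
      linear_combination a.1 * E1 + a.2.1 * E2 + a.2.2 * E3
    have hl : F19aux.lf a ≠ 0 := by
      intro hl0
      apply ha
      rw [hl0] at E1 E2 E3
      have hx2 : a.1 ^ 2 = 2 * a.2.1 * a.2.2 := by linarith
      have hy2 : a.2.1 ^ 2 = 2 * a.1 * a.2.2 := by linarith
      have hz2 : a.2.2 ^ 2 = 2 * a.1 * a.2.1 := by linarith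
      have hsq : (a.1 * a.2.1 * a.2.2) ^ 2 = 0 := by
        have h : (a.1 * a.2.1 * a.2.2) ^ 2 = a.1 ^ 2 * a.2.1 ^ 2 * a.2.2 ^ 2 := by ring
        rw [hx2, hy2, hz2] at h
        nlinarith [h]
      have hz : a.1 * a.2.1 * a.2.2 = 0 := by
        exact pow_eq_zero_iff two_ne_zero |>.mp hsq
      have sqz : ∀ t : ℝ, t ^ 2 = 0 → t = 0 := fun t ht =>
        pow_eq_zero_iff two_ne_zero |>.mp ht
      have hx0 : a.1 = 0 ∧ a.2.1 = 0 ∧ a.2.2 = 0 := by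
        rcases mul_eq_zero.1 hz with h | h
        · rcases mul_eq_zero.1 h with h | h
          · have hy : a.2.1 = 0 := sqz _ (by rw [hy2, h]; ring)
            have hzz : a.2.2 = 0 := sqz _ (by rw [hz2, h]; ring)
            exact ⟨h, hy, hzz⟩
          · have hx : a.1 = 0 := sqz _ (by rw [hx2, h]; ring)
            have hzz : a.2.2 = 0 := sqz _ (by rw [hz2, hx]; ring)
            exact ⟨hx, h, hzz⟩
        · have hx : a.1 = 0 := sqz _ (by rw [hx2, h]; ring)
          have hy : a.2.1 = 0 := sqz _ (by rw [hy2, hx]; ring)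
          exact ⟨hx, hy, h⟩
      exact Prod.ext hx0.1 (Prod.ext hx0.2.1 hx0.2.2)
    have : 0 < (F19aux.lf a) ^ 2 := by positivity
    linarith
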